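/- arXiv:2410.03652 — 3 statements merged into one kernel-verified Lean document; each statement's English description precedes it below -/
import Mathlib

section
/- The set $\{\sqrt{n} : n \text{ a square-free positive integer}\}$ is linearly independent over $\mathbb{Q}$. -/
open Real Finset

/-- The subfield of `ℝ` generated by the square roots of the elements of `P`. -/
noncomputable def sqrtField (P : Finset ℕ) : Subfield ℝ :=
  Subfield.closure {x | ∃ p ∈ P, x = Real.sqrt p}

lemma sqrt_mem_sqrtField {P : Finset ℕ} {p : ℕ} (hp : p ∈ P) :
    Real.sqrt p ∈ sqrtField P :=
  Subfield.subset_closure ⟨p, hp, rfl⟩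

lemma sqrtField_mono {P Q : Finset ℕ} (h : P ⊆ Q) : sqrtField P ≤ sqrtField Q := by
  apply Subfield.closure_le.mpr
  rintro x ⟨p, hp, rfl⟩
  exact sqrt_mem_sqrtField (h hp)

/-- Every element of `sqrtField (insert p Q)` has the form `a + b * √p` with
`a, b ∈ sqrtField Q`, provided `√p ∉ sqrtField Q`. -/
lemma sqrtField_insert_rep {p : ℕ} {Q : Finset ℕ} (hp : Real.sqrt p ∉ sqrtField Q) :
    ∀ x ∈ sqrtField (insert p Q),
      ∃ a ∈ sqrtField Q, ∃ b ∈ sqrtField Q, x = a + b * Real.sqrt p := by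
  have hpp : Real.sqrt p * Real.sqrt p = (p : ℝ) :=
    Real.mul_self_sqrt (Nat.cast_nonneg p)
  intro x hx
  induction hx using Subfield.closure_induction with
  | mem y hy =>
    obtain ⟨r, hr, rfl⟩ := hy
    rcases Finset.mem_insert.mp hr with rfl | hr'
    · exact ⟨0, zero_mem _, 1, one_mem _, by ring⟩
    · exact ⟨Real.sqrt r, sqrt_mem_sqrtField hr', 0, zero_mem _, by ring⟩
  | one => exact ⟨1, one_mem _, 0, zero_mem _, by ring⟩
  | add x y hx hy ihx ihy =>
    obtain ⟨a, ha, b, hb, rfl⟩ := ihx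
    obtain ⟨c, hc, d, hd, rfl⟩ := ihy
    exact ⟨a + c, add_mem ha hc, b + d, add_mem hb hd, by ring⟩
  | neg x hx ihx =>
    obtain ⟨a, ha, b, hb, rfl⟩ := ihx
    exact ⟨-a, neg_mem ha, -b, neg_mem hb, by ring⟩
  | mul x y hx hy ihx ihy =>
    obtain ⟨a, ha, b, hb, rfl⟩ := ihx
    obtain ⟨c, hc, d, hd, rfl⟩ := ihy
    refine ⟨a * c + b * d * p, ?_, a * d + b * c, ?_, ?_⟩
    · exact add_mem (mul_mem ha hc) (mul_mem (mul_mem hb hd) (natCast_mem _ p))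
    · exact add_mem (mul_mem ha hd) (mul_mem hb hc)
    · linear_combination (b * d) * hpp
  | inv x hx ihx =>
    obtain ⟨a, ha, b, hb, rfl⟩ := ihx
    by_cases hx0 : a + b * Real.sqrt p = 0
    · exact ⟨0, zero_mem _, 0, zero_mem _, by rw [hx0]; simp⟩
    · have hconj : a - b * Real.sqrt p ≠ 0 := by
        intro hc
        have hab : a = b * Real.sqrt p := by linarith
        by_cases hb0 : b = 0
        · exact hx0 (by rw [hab, hb0]; ring)
        · exact hp (by
            have : Real.sqrt p = a / b := by field_simp [hab]; rw [hab]; ring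
            rw [this]; exact div_mem ha hb)
      set d : ℝ := a * a - b * b * p with hd
      have hd0 : d ≠ 0 := by
        intro h0
        have : (a + b * Real.sqrt p) * (a - b * Real.sqrt p) = d := by
          rw [hd]; linear_combination (-(b * b)) * hpp
        rw [h0] at this
        rcases mul_eq_zero.mp this with h | h
        · exact hx0 h
        · exact hconj h
      have hdmem : d ∈ sqrtField Q :=
        sub_mem (mul_mem ha ha) (mul_mem (mul_mem hb hb) (natCast_mem _ p))
      refine ⟨a / d, div_mem ha hdmem, -b / d, div_mem (neg_mem hb) hdmem, ?_⟩
      refine (eq_inv_of_mul_eq_one_left ?_).symm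
      have hmul : (a + b * Real.sqrt p) * (a / d + -b / d * Real.sqrt p) = 1 := by
        field_simp
        rw [hd]; linear_combination (-(b * b)) * hpp
      linarith [hmul, mul_comm (a + b * Real.sqrt p) (a / d + -b / d * Real.sqrt p)]

/-- Uniqueness part: if `a + b √p = 0` with `a, b` in the smaller field, both vanish. -/
lemma sqrtField_rep_zero {p : ℕ} {Q : Finset ℕ} (hp : Real.sqrt p ∉ sqrtField Q)
    {a b : ℝ} (ha : a ∈ sqrtField Q) (hb : b ∈ sqrtField Q)
    (h : a + b * Real.sqrt p = 0) : a = 0 ∧ b = 0 := by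
  by_cases hb0 : b = 0
  · constructor
    · rw [hb0] at h; linarith
    · exact hb0
  · exfalso
    apply hp
    have : Real.sqrt p = -a / b := by field_simp; linarith
    rw [this]
    exact div_mem (neg_mem ha) hb

lemma squarefree_not_isSquare {n q : ℕ} (hn : Squarefree n) (hq : q.Prime)
    (hqn : q ∣ n) : ¬ IsSquare n := by
  rintro ⟨k, rfl⟩
  have hqk : q ∣ k := hq.dvd_mul.mp hqn |>.elim id id
  exact hq.not_isUnit (hn q (mul_dvd_mul hqk hqk))

/-- Key lemma: if `n` is squarefree and has a prime factor `q ∉ P`, then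
`√n` does not lie in the field generated by square roots of elements of `P`. -/
lemma sqrt_not_mem_sqrtField :
    ∀ (P : Finset ℕ), (∀ p ∈ P, Nat.Prime p) → ∀ n q : ℕ, Squarefree n → q.Prime →
      q ∣ n → q ∉ P → Real.sqrt n ∉ sqrtField P := by
  intro P
  induction P using Finset.induction_on with
  | empty =>
    intro _ n q hn hq hqn _ hmem
    have key : ∀ x : ℝ, x ∈ sqrtField (∅ : Finset ℕ) → ∃ r : ℚ, x = (r : ℝ) := by
      intro x hx
      induction hx using Subfield.closure_induction with
      | mem y hy => obtain ⟨r, hr, _⟩ := hy; simp at hr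
      | one => exact ⟨1, by norm_num⟩
      | add x y _ _ ihx ihy =>
        obtain ⟨r, hr⟩ := ihx; obtain ⟨s, hs⟩ := ihy
        exact ⟨r + s, by rw [hr, hs]; push_cast; ring⟩
      | neg x _ ihx =>
        obtain ⟨r, hr⟩ := ihx; exact ⟨-r, by rw [hr]; push_cast; ring⟩
      | inv x _ ihx =>
        obtain ⟨r, hr⟩ := ihx; exact ⟨r⁻¹, by rw [hr]; push_cast; ring⟩
      | mul x y _ _ ihx ihy =>
        obtain ⟨r, hr⟩ := ihx; obtain ⟨s, hs⟩ := ihy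
        exact ⟨r * s, by rw [hr, hs]; push_cast; ring⟩
    obtain ⟨r, hr⟩ := key _ hmem
    exact (irrational_sqrt_natCast_iff.mpr (squarefree_not_isSquare hn hq hqn)) ⟨r, hr.symm⟩
  | @insert p Q hpQ ih =>
    intro hprimes n q hn hq hqn hqP hmem
    have hpprime : p.Prime := hprimes p (Finset.mem_insert_self p Q)
    have hQprimes : ∀ r ∈ Q, Nat.Prime r := fun r hr =>
      hprimes r (Finset.mem_insert_of_mem hr)
    have hqQ : q ∉ Q := fun h => hqP (Finset.mem_insert_of_mem h)
    have hqne : q ≠ p := fun h => hqP (h ▸ Finset.mem_insert_self p Q)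
    have hpnot : Real.sqrt p ∉ sqrtField Q :=
      ih hQprimes p p hpprime.prime.squarefree hpprime dvd_rfl hpQ
    obtain ⟨a, ha, b, hb, hab⟩ := sqrtField_insert_rep hpnot _ hmem
    have hn0 : n ≠ 0 := hn.ne_zero
    have hnn : Real.sqrt n * Real.sqrt n = (n : ℝ) := Real.mul_self_sqrt (Nat.cast_nonneg n)
    have hpp : Real.sqrt p * Real.sqrt p = (p : ℝ) := Real.mul_self_sqrt (Nat.cast_nonneg p)
    have hsq : (a + b * Real.sqrt p) * (a + b * Real.sqrt p) = (n : ℝ) := by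
      rw [← hab]; exact hnn
    have hkey : (a * a + b * b * p - n) + (2 * (a * b)) * Real.sqrt p = 0 := by
      linear_combination hsq - (b * b) * hpp
    have hz := sqrtField_rep_zero hpnot
      (sub_mem (add_mem (mul_mem ha ha) (mul_mem (mul_mem hb hb) (natCast_mem _ p)))
        (natCast_mem _ n))
      (mul_mem (mul_mem (by exact_mod_cast natCast_mem (sqrtField Q) 2) ha) hb)
      (by linear_combination hkey)
    have hab0 : a * b = 0 := by
      have := hz.2; nlinarith [this]
    rcases mul_eq_zero.mp hab0 with ha0 | hb0
    · -- a = 0 : √n = b √p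
      rw [ha0, zero_add] at hab
      by_cases hpn : p ∣ n
      · -- n = p * m
        obtain ⟨m, hm⟩ := hpn
        have hmn : m ∣ n := ⟨p, by rw [hm]; ring⟩
        have hmsf : Squarefree m := Squarefree.squarefree_of_dvd hmn hn
        have hqm : q ∣ m := by
          rcases (hq.dvd_mul.mp (hm ▸ hqn)) with h | h
          · exact absurd ((Nat.prime_dvd_prime_iff_eq hq hpprime).mp h) hqne
          · exact h
        have hsqrtm : Real.sqrt m = b := by
          have hsp : Real.sqrt p ≠ 0 := by
            have : (0:ℝ) < p := by exact_mod_cast hpprime.pos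
            positivity
          have h1 : Real.sqrt n = Real.sqrt p * Real.sqrt m := by
            rw [hm]; push_cast; exact Real.sqrt_mul (Nat.cast_nonneg p) m
          have h2 : Real.sqrt p * Real.sqrt m = Real.sqrt p * b := by
            rw [← h1, hab]; ring
          exact mul_left_cancel₀ hsp h2
        exact ih hQprimes m q hmsf hq hqm hqQ (hsqrtm ▸ hb)
      · -- p ∤ n : consider n * p
        have hcop : Nat.Coprime n p := (Nat.coprime_comm.mp (hpprime.coprime_iff_not_dvd.mpr hpn))
        have hnpsf : Squarefree (n * p) :=
          (Nat.squarefree_mul hcop).mpr ⟨hn, hpprime.prime.squarefree⟩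
        have hqnp : q ∣ n * p := Dvd.dvd.mul_right hqn p
        have hsqrtnp : Real.sqrt (↑(n * p)) = b * p := by
          push_cast
          rw [Real.sqrt_mul (Nat.cast_nonneg n), hab, mul_assoc, hpp]
        apply ih hQprimes (n * p) q hnpsf hq hqnp hqQ
        rw [hsqrtnp]
        exact mul_mem hb (natCast_mem _ p)
    · -- b = 0 : √n = a
      rw [hb0, zero_mul, add_zero] at hab
      exact ih hQprimes n q hn hq hqn hqQ (hab ▸ ha)

lemma sqrt_prod_cast (t : Finset ℕ) :
    Real.sqrt (↑(∏ p ∈ t, p)) = ∏ p ∈ t, Real.sqrt p := by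
  induction t using Finset.induction_on with
  | empty => simp
  | @insert p t hpt ih =>
    rw [Finset.prod_insert hpt, Nat.cast_mul, Real.sqrt_mul (Nat.cast_nonneg p), ih,
      Finset.prod_insert hpt]

/-- If `n` is squarefree and all its prime factors lie in `P`, then `√n ∈ sqrtField P`. -/
lemma sqrt_mem_sqrtField_of_primeFactors {n : ℕ} {P : Finset ℕ} (hn : Squarefree n)
    (hsub : n.primeFactors ⊆ P) : Real.sqrt n ∈ sqrtField P := by
  have : (n : ℝ) = ((∏ p ∈ n.primeFactors, p : ℕ) : ℝ) := by
    rw [Nat.prod_primeFactors_of_squarefree hn]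
  rw [this, sqrt_prod_cast]
  exact prod_mem fun p hp => sqrt_mem_sqrtField (hsub hp)

lemma besicovitch_aux : ∀ (k : ℕ) (s : Finset ℕ), (s.sup Nat.primeFactors).card ≤ k →
    (∀ n ∈ s, Squarefree n) → ∀ c : ℕ → ℚ,
    ∑ n ∈ s, (c n : ℝ) * Real.sqrt n = 0 → ∀ n ∈ s, c n = 0 := by
  intro k
  induction k with
  | zero =>
    intro s hcard hs c h n hn
    have hU : s.sup Nat.primeFactors = ∅ := Finset.card_eq_zero.mp (Nat.le_zero.mp hcard)
    have hone : ∀ m ∈ s, m = 1 := by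
      intro m hm
      have : m.primeFactors = ∅ := by
        have := Finset.le_sup (f := Nat.primeFactors) hm
        rw [hU] at this
        exact Finset.subset_empty.mp this
      rcases Nat.primeFactors_eq_empty.mp this with h0 | h1
      · exact absurd (h0 ▸ hs m hm) not_squarefree_zero
      · exact h1
    have hs1 : s = {1} := by
      apply Finset.Subset.antisymm
      · intro m hm; simp [hone m hm]
      · intro m hm
        simp only [Finset.mem_singleton] at hm
        rwa [hm, ← hone n hn]
    rw [hs1] at h
    simp at h
    have : n = 1 := hone n hn
    rw [this]
    exact_mod_cast h
  | succ k ih =>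
    intro s hcard hs c h n hn
    set U := s.sup Nat.primeFactors with hUdef
    by_cases hU : U = ∅
    · exact ih s (by rw [← hUdef, hU]; simp) hs c h n hn
    · obtain ⟨q, hqU⟩ := Finset.nonempty_iff_ne_empty.mpr hU
      obtain ⟨n₀, hn₀s, hqn₀⟩ := Finset.mem_sup.mp hqU
      have hqprime : q.Prime := Nat.prime_of_mem_primeFactors hqn₀
      classical
      set s1 := s.filter (fun m => q ∣ m) with hs1
      set s2 := s.filter (fun m => ¬ q ∣ m) with hs2
      set P := U.erase q with hP
      have hPprimes : ∀ p ∈ P, Nat.Prime p := fun p hp =>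
        Nat.prime_of_mem_primeFactors (Finset.mem_sup.mp (Finset.mem_of_mem_erase hp)).choose_spec.2
      -- elements of s2 have prime factors in P
      have hfac2 : ∀ m ∈ s2, m.primeFactors ⊆ P := by
        intro m hm
        rw [hs2, Finset.mem_filter] at hm
        intro p hp
        rw [hP]
        apply Finset.mem_erase.mpr
        refine ⟨?_, Finset.le_sup (f := Nat.primeFactors) hm.1 hp⟩
        rintro rfl
        exact hm.2 (Nat.dvd_of_mem_primeFactors hp)
      set t := s1.image (· / q) with ht
      have hinj : ∀ x ∈ s1, ∀ y ∈ s1, x / q = y / q → x = y := by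
        intro x hx y hy hxy
        rw [hs1, Finset.mem_filter] at hx hy
        rw [← Nat.div_mul_cancel hx.2, ← Nat.div_mul_cancel hy.2, hxy]
      have hmul : ∀ m ∈ s1, q * (m / q) = m := by
        intro m hm
        rw [hs1, Finset.mem_filter] at hm
        exact Nat.mul_div_cancel' hm.2
      have hsf_t : ∀ m ∈ t, Squarefree m := by
        intro m hm
        rw [ht, Finset.mem_image] at hm
        obtain ⟨x, hx, rfl⟩ := hm
        have hxs := (Finset.mem_filter.mp hx).1
        exact Squarefree.squarefree_of_dvd (Nat.div_dvd_of_dvd (Finset.mem_filter.mp hx).2) (hs x hxs)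
      have hfac_t : ∀ m ∈ t, m.primeFactors ⊆ P := by
        intro m hm
        rw [ht, Finset.mem_image] at hm
        obtain ⟨x, hx, rfl⟩ := hm
        have hxs := (Finset.mem_filter.mp hx).1
        have hqx := (Finset.mem_filter.mp hx).2
        have hxsf := hs x hxs
        have hdvd : x / q ∣ x := Nat.div_dvd_of_dvd hqx
        intro p hp
        rw [hP]
        apply Finset.mem_erase.mpr
        constructor
        · intro hpq
          have hpdvd : q ∣ x / q := by
            rw [hpq] at hp; exact Nat.dvd_of_mem_primeFactors hp
          have : q * q ∣ x := by
            calc q * q ∣ q * (x / q) := mul_dvd_mul_left q hpdvd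
            _ = x := Nat.mul_div_cancel' hqx
          exact hqprime.not_isUnit (hxsf q this)
        · exact Finset.le_sup (f := Nat.primeFactors) hxs
            (Nat.primeFactors_mono hdvd hxsf.ne_zero hp)
      -- decompose the sum
      set A := ∑ m ∈ s2, (c m : ℝ) * Real.sqrt m with hA
      set B := ∑ m ∈ t, (c (q * m) : ℝ) * Real.sqrt m with hB
      have hBsum : B = ∑ m ∈ s1, (c m : ℝ) * Real.sqrt (↑(m / q)) := by
        rw [hB, ht, Finset.sum_image hinj]
        apply Finset.sum_congr rfl
        intro m hm
        rw [hmul m hm]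
      have hsplit : A + Real.sqrt q * B = 0 := by
        rw [hBsum, Finset.mul_sum]
        have : ∀ m ∈ s1, Real.sqrt q * ((c m : ℝ) * Real.sqrt (↑(m / q)))
            = (c m : ℝ) * Real.sqrt m := by
          intro m hm
          have : (m : ℝ) = (q : ℝ) * (↑(m / q) : ℝ) := by
            rw [← Nat.cast_mul, hmul m hm]
          rw [this, Real.sqrt_mul (Nat.cast_nonneg q)]
          ring
        rw [Finset.sum_congr rfl this, hA]
        rw [← h, hs1, hs2, add_comm]
        exact (Finset.sum_filter_add_sum_filter_not s (fun m => q ∣ m) _)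
      have hAmem : A ∈ sqrtField P := by
        apply sum_mem
        intro m hm
        exact mul_mem (SubfieldClass.ratCast_mem _ _)
          (sqrt_mem_sqrtField_of_primeFactors (hs m (Finset.mem_filter.mp hm).1) (hfac2 m hm))
      have hBmem : B ∈ sqrtField P := by
        apply sum_mem
        intro m hm
        exact mul_mem (SubfieldClass.ratCast_mem _ _)
          (sqrt_mem_sqrtField_of_primeFactors (hsf_t m hm) (hfac_t m hm))
      have hqnot : Real.sqrt q ∉ sqrtField P :=
        sqrt_not_mem_sqrtField P hPprimes q q hqprime.prime.squarefree hqprime dvd_rfl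
          (Finset.notMem_erase q U)
      have hB0 : B = 0 := by
        by_contra hB0
        apply hqnot
        have : Real.sqrt q = -A / B := by field_simp; linarith
        rw [this]
        exact div_mem (neg_mem hAmem) hBmem
      have hA0 : A = 0 := by rw [hB0] at hsplit; simpa using hsplit
      -- cardinality bounds
      have hcardP : P.card ≤ k := by
        rw [hP]
        have := Finset.card_erase_of_mem hqU
        omega
      have hsup_le : ∀ (u : Finset ℕ), (∀ m ∈ u, m.primeFactors ⊆ P) →
          (u.sup Nat.primeFactors).card ≤ k := by
        intro u hu
        exact le_trans (Finset.card_le_card (Finset.sup_le hu)) hcardP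
      have hc2 := ih s2 (hsup_le s2 hfac2) (fun m hm => hs m (Finset.mem_filter.mp hm).1) c hA0
      have hct := ih t (hsup_le t hfac_t) hsf_t (fun m => c (q * m)) hB0
      by_cases hqn : q ∣ n
      · have hns1 : n ∈ s1 := Finset.mem_filter.mpr ⟨hn, hqn⟩
        have : n / q ∈ t := Finset.mem_image_of_mem _ hns1
        have h5 : c (q * (n / q)) = 0 := hct (n / q) this
        rwa [hmul n hns1] at h5
      · exact hc2 n (Finset.mem_filter.mpr ⟨hn, hqn⟩)

/-- Besicovitch's theorem: the square roots of the square-free positive integers are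
linearly independent over `ℚ`. -/
theorem sqrt_squarefree_linearIndependent (s : Finset ℕ) (hs : ∀ n ∈ s, Squarefree n)
    (c : ℕ → ℚ) (h : ∑ n ∈ s, (c n : ℝ) * Real.sqrt n = 0) :
    ∀ n ∈ s, c n = 0 :=
  besicovitch_aux (s.sup Nat.primeFactors).card s le_rfl hs c h
end

section
/- Let $m \ge 1$ and let $n_1, \dots, n_m \le M$ be positive integers, and let $\varepsilon_1, \dots, \varepsilon_m \in \{+1, -1\}$. If $\sum_{j=1}^m \varepsilon_j \sqrt{n_j} \ne 0$, then $\left| \sum_{j=1}^m \varepsilon_j \sqrt{n_j} \right| \ge (m \sqrt{M})^{-(2^{m-1}-1)}$. -/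
open Polynomial

/-- The product `∏_{σ ∈ {±1}^t} (c + ∑ σᵢ tᵢ)`, defined recursively. -/
def Gp : List ℝ → ℝ → ℝ
  | [], c => c
  | y :: t, c => Gp t (c + y) * Gp t (c - y)

lemma Gp_abs_le (A : ℝ) : ∀ (t : List ℝ) (c : ℝ),
    |c| + (t.map abs).sum ≤ A → |Gp t c| ≤ A ^ (2 ^ t.length) := by
  intro t
  induction t with
  | nil => intro c hc; simpa [Gp] using hc
  | cons y t ih =>
    intro c hc
    simp only [List.map_cons, List.sum_cons] at hc
    have h1 : |c + y| + (t.map abs).sum ≤ A := by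
      have := abs_add_le c y; linarith
    have h2 : |c - y| + (t.map abs).sum ≤ A := by
      have := abs_sub c y; linarith
    have hs : (0:ℝ) ≤ (t.map abs).sum :=
      List.sum_nonneg (by intro x hx; obtain ⟨z, _, rfl⟩ := List.mem_map.mp hx; exact abs_nonneg z)
    have hA : 0 ≤ A := by
      have := abs_nonneg (c + y); linarith
    calc |Gp (y :: t) c| = |Gp t (c + y)| * |Gp t (c - y)| := by
          simp [Gp, abs_mul]
      _ ≤ A ^ (2 ^ t.length) * A ^ (2 ^ t.length) := by
          exact mul_le_mul (ih _ h1) (ih _ h2) (abs_nonneg _) (pow_nonneg hA _)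
      _ = A ^ (2 ^ (y :: t).length) := by
          rw [← pow_add]; congr 1; simp [List.length_cons, pow_succ]; ring

lemma Gp_factor (A : ℝ) : ∀ (t : List ℝ) (c : ℝ),
    |c| + (t.map abs).sum ≤ A →
    ∃ H : ℝ, Gp t c = (c + t.sum) * H ∧ |H| ≤ A ^ (2 ^ t.length - 1) := by
  intro t
  induction t with
  | nil => intro c _; exact ⟨1, by simp [Gp], by simp⟩
  | cons y t ih =>
    intro c hc
    simp only [List.map_cons, List.sum_cons] at hc
    have h1 : |c + y| + (t.map abs).sum ≤ A := by
      have := abs_add_le c y; linarith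
    have h2 : |c - y| + (t.map abs).sum ≤ A := by
      have := abs_sub c y; linarith
    have hs : (0:ℝ) ≤ (t.map abs).sum :=
      List.sum_nonneg (by intro x hx; obtain ⟨z, _, rfl⟩ := List.mem_map.mp hx; exact abs_nonneg z)
    have hA : 0 ≤ A := by
      have := abs_nonneg (c + y); linarith
    obtain ⟨H, hH, hHle⟩ := ih (c + y) h1
    refine ⟨H * Gp t (c - y), ?_, ?_⟩
    · simp only [Gp, hH, List.sum_cons]; ring
    · calc |H * Gp t (c - y)| = |H| * |Gp t (c - y)| := abs_mul _ _
        _ ≤ A ^ (2 ^ t.length - 1) * A ^ (2 ^ t.length) := by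
            exact mul_le_mul hHle (Gp_abs_le A t _ h2) (abs_nonneg _) (pow_nonneg hA _)
        _ = A ^ (2 ^ (y :: t).length - 1) := by
            rw [← pow_add]; congr 1
            have h2pos : 1 ≤ 2 ^ t.length := Nat.one_le_two_pow
            simp [List.length_cons, pow_succ]; omega

lemma Gp_neg : ∀ (t : List ℝ) (c : ℝ), Gp t (-c) = (-1 : ℝ) ^ (2 ^ t.length) * Gp t c := by
  intro t
  induction t with
  | nil => intro c; simp [Gp]
  | cons y t ih =>
    intro c
    have e1 : -c + y = -(c - y) := by ring
    have e2 : -c - y = -(c + y) := by ring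
    simp only [Gp, e1, e2, ih]
    rw [show (2:ℕ) ^ (y :: t).length = 2 ^ t.length + 2 ^ t.length by
      rw [List.length_cons, pow_succ]; ring, pow_add]
    ring

lemma Gp_even (t : List ℝ) (ht : t ≠ []) (c : ℝ) : Gp t (-c) = Gp t c := by
  rw [Gp_neg]
  have : Even (2 ^ t.length) := by
    rcases t with _ | ⟨y, t⟩
    · simp at ht
    · exact (Nat.even_pow.mpr ⟨even_iff_two_dvd.mpr ⟨1, rfl⟩, by simp⟩)
  rw [this.neg_one_pow, one_mul]

lemma Gp_zero : ∀ (t : List ℝ) (c : ℝ), Gp t c = 0 →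
    ∃ u : List ℝ, u.Sublist t ∧ c + t.sum = 2 * u.sum := by
  intro t
  induction t with
  | nil => intro c hc; exact ⟨[], List.Sublist.refl _, by simpa [Gp] using hc⟩
  | cons y t ih =>
    intro c hc
    simp only [Gp, mul_eq_zero] at hc
    rcases hc with hc | hc
    · obtain ⟨u, hu, hsum⟩ := ih _ hc
      exact ⟨u, hu.cons y, by simp only [List.sum_cons]; linarith⟩
    · obtain ⟨u, hu, hsum⟩ := ih _ hc
      exact ⟨y :: u, hu.cons₂ y, by simp only [List.sum_cons]; linarith⟩

/-- Pair lemma: expansion of `Q(x ± y)` as `a(x) ± y b(x)` with integer polys, given `y² = k`. -/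
lemma pair_lemma (y : ℝ) (k : ℤ) (hy : y ^ 2 = (k : ℝ)) (Q : Polynomial ℤ) :
    ∃ a b : Polynomial ℤ, ∀ x : ℝ,
      (Polynomial.aeval (x + y)) Q = (Polynomial.aeval x) a + y * (Polynomial.aeval x) b ∧
      (Polynomial.aeval (x - y)) Q = (Polynomial.aeval x) a - y * (Polynomial.aeval x) b := by
  induction Q using Polynomial.induction_on with
  | C r => exact ⟨C r, 0, fun x => by simp⟩
  | add p q hp hq =>
    obtain ⟨a1, b1, h1⟩ := hp
    obtain ⟨a2, b2, h2⟩ := hq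
    refine ⟨a1 + a2, b1 + b2, fun x => ?_⟩
    obtain ⟨h1p, h1m⟩ := h1 x
    obtain ⟨h2p, h2m⟩ := h2 x
    constructor <;> simp [h1p, h1m, h2p, h2m] <;> ring
  | monomial n r hr =>
    obtain ⟨a, b, hab⟩ := hr
    refine ⟨X * a + C k * b, a + X * b, fun x => ?_⟩
    obtain ⟨hp, hm⟩ := hab x
    have e1 : (Polynomial.aeval (x + y)) (C r * X ^ (n + 1))
        = (Polynomial.aeval (x + y)) (C r * X ^ n) * (x + y) := by
      simp [pow_succ]; ring
    have e2 : (Polynomial.aeval (x - y)) (C r * X ^ (n + 1))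
        = (Polynomial.aeval (x - y)) (C r * X ^ n) * (x - y) := by
      simp [pow_succ]; ring
    have hyy : y * y = (k : ℝ) := by rw [← hy]; ring
    constructor
    · rw [e1, hp]; simp only [map_add, map_mul, aeval_X, aeval_C, map_intCast, algebraMap_int_eq, eq_intCast]
      linear_combination (Polynomial.aeval x) b * hyy
    · rw [e2, hm]; simp only [map_add, map_mul, aeval_X, aeval_C, map_intCast, algebraMap_int_eq, eq_intCast]
      linear_combination (Polynomial.aeval x) b * hyy

lemma prod_lemma (y : ℝ) (k : ℤ) (hy : y ^ 2 = (k : ℝ)) (Q : Polynomial ℤ) :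
    ∃ Q' : Polynomial ℤ, ∀ x : ℝ,
      (Polynomial.aeval x) Q' = (Polynomial.aeval (x + y)) Q * (Polynomial.aeval (x - y)) Q := by
  obtain ⟨a, b, hab⟩ := pair_lemma y k hy Q
  refine ⟨a ^ 2 - C k * b ^ 2, fun x => ?_⟩
  obtain ⟨hp, hm⟩ := hab x
  rw [hp, hm]
  simp only [map_sub, map_pow, map_mul, aeval_C, map_intCast, algebraMap_int_eq, eq_intCast]
  have hyy : y * y = (k : ℝ) := by rw [← hy]; ring
  linear_combination ((Polynomial.aeval x) b) ^ 2 * hyy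

lemma Gp_poly : ∀ (t : List ℝ), (∀ y ∈ t, ∃ k : ℤ, y ^ 2 = (k : ℝ)) →
    ∃ Q : Polynomial ℤ, ∀ c : ℝ, Gp t c = (Polynomial.aeval c) Q := by
  intro t
  induction t with
  | nil => intro _; exact ⟨X, fun c => by simp [Gp]⟩
  | cons y t ih =>
    intro hyp
    obtain ⟨Q, hQ⟩ := ih (fun z hz => hyp z (List.mem_cons_of_mem y hz))
    obtain ⟨k, hk⟩ := hyp y (List.mem_cons_self)
    obtain ⟨Q', hQ'⟩ := prod_lemma y k hk Q
    exact ⟨Q', fun c => by rw [Gp, hQ, hQ, hQ' c]⟩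

set_option maxRecDepth 4000 in
lemma coeff_comp_neg_X (P : Polynomial ℝ) (n : ℕ) :
    (P.comp (-X)).coeff n = (-1) ^ n * P.coeff n := by
  induction P using Polynomial.induction_on' with
  | add p q hp hq => simp only [add_comp, coeff_add, hp, hq]; ring
  | monomial i a =>
    have hpow : (-X : Polynomial ℝ) ^ i = C ((-1 : ℝ) ^ i) * X ^ i := by
      rw [neg_pow, ← C_1, ← C_neg, ← C_pow]
    rw [monomial_comp, hpow, coeff_monomial, ← mul_assoc, ← C_mul, coeff_C_mul, coeff_X_pow]
    rcases eq_or_ne n i with rfl | hne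
    · simp [mul_comm]
    · simp [hne, Ne.symm hne]

lemma odd_coeff_zero (Q : Polynomial ℤ) (hev : ∀ c : ℝ, (Polynomial.aeval (-c)) Q = (Polynomial.aeval c) Q)
    (n : ℕ) (hn : Odd n) : Q.coeff n = 0 := by
  set P : Polynomial ℝ := Q.map (Int.castRingHom ℝ) with hP
  have heval : ∀ r : ℝ, P.eval r = (Polynomial.aeval r) Q := by
    intro r
    rw [hP, Polynomial.aeval_def, algebraMap_int_eq, ← Polynomial.eval_map]
  have hPev : P.comp (-X) = P := by
    apply Polynomial.funext
    intro r
    rw [eval_comp]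
    simp only [eval_neg, eval_X]
    rw [heval, heval, hev]
  have hkey := coeff_comp_neg_X P n
  rw [hPev, hn.neg_one_pow] at hkey
  have hz : P.coeff n = 0 := by linarith
  rw [hP, Polynomial.coeff_map, eq_intCast] at hz
  exact_mod_cast hz

lemma eval_even_at_sqrt (Q : Polynomial ℤ) (hodd : ∀ n, Odd n → Q.coeff n = 0)
    (y : ℝ) (k : ℤ) (hy : y ^ 2 = (k : ℝ)) :
    ∃ z : ℤ, (Polynomial.aeval y) Q = (z : ℝ) := by
  refine ⟨∑ j ∈ Finset.range (Q.natDegree + 1), Q.coeff j * k ^ (j / 2), ?_⟩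
  rw [Polynomial.aeval_eq_sum_range]
  push_cast
  apply Finset.sum_congr rfl
  intro j _
  rcases Nat.even_or_odd j with hj | hj
  · have : y ^ j = (k : ℝ) ^ (j / 2) := by
      obtain ⟨i, rfl⟩ := hj
      rw [← hy, ← pow_mul]
      congr 1
      omega
    rw [zsmul_eq_mul]
    push_cast
    rw [this]
  · rw [hodd j hj]; simp

lemma Gp_int (t : List ℝ) (ht : t ≠ []) (hyp : ∀ y ∈ t, ∃ k : ℤ, y ^ 2 = (k : ℝ))
    (c : ℝ) (kc : ℤ) (hc : c ^ 2 = (kc : ℝ)) : ∃ z : ℤ, Gp t c = (z : ℝ) := by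
  obtain ⟨Q, hQ⟩ := Gp_poly t hyp
  have hev : ∀ x : ℝ, (Polynomial.aeval (-x)) Q = (Polynomial.aeval x) Q := fun x => by
    rw [← hQ, ← hQ, Gp_even t ht]
  obtain ⟨z, hz⟩ := eval_even_at_sqrt Q (fun n hn => odd_coeff_zero Q hev n hn) c kc hc
  exact ⟨z, by rw [hQ, hz]⟩

lemma rpow_form (x : ℝ) (hx : 0 < x) (j : ℕ) :
    x ^ (-((2 : ℝ) ^ (j - 1) - 1)) = (x ^ (2 ^ (j - 1) - 1 : ℕ))⁻¹ := by
  have h1 : ((2 : ℝ) ^ (j - 1) - 1) = ((2 ^ (j - 1) - 1 : ℕ) : ℝ) := by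
    rw [Nat.cast_sub Nat.one_le_two_pow]
    push_cast
    ring
  rw [h1, ← Real.rpow_natCast x (2 ^ (j - 1) - 1), ← Real.rpow_neg hx.le]

lemma aux (M : ℕ) : ∀ (N : ℕ) (l : List ℝ), l.length ≤ N → l ≠ [] →
    (∀ y ∈ l, ∃ k : ℕ, 1 ≤ k ∧ k ≤ M ∧ y ^ 2 = (k : ℝ)) → l.sum ≠ 0 →
    ((l.length : ℝ) * Real.sqrt M) ^ (-((2 : ℝ) ^ (l.length - 1) - 1)) ≤ |l.sum| := by
  intro N
  induction N with
  | zero =>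
    intro l hlen hne
    exact absurd (List.length_eq_zero_iff.mp (Nat.le_zero.mp hlen)) hne
  | succ N ih =>
    rintro (_ | ⟨c, t⟩) hlen hne hyp hsum
    · exact absurd rfl hne
    obtain ⟨kc, hkc1, hkcM, hkc⟩ := hyp c (List.mem_cons_self)
    have hM1 : 1 ≤ M := le_trans hkc1 hkcM
    have hsqrtM : 1 ≤ Real.sqrt M := by
      have h := Real.sqrt_le_sqrt (show (1:ℝ) ≤ (M:ℝ) by exact_mod_cast hM1)
      simpa using h
    have habs : ∀ y ∈ c :: t, |y| ≤ Real.sqrt M := by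
      intro y hy
      obtain ⟨k, hk1, hkM, hk⟩ := hyp y hy
      have h1 : |y| = Real.sqrt (k : ℝ) := by rw [← Real.sqrt_sq_eq_abs, hk]
      rw [h1]
      exact Real.sqrt_le_sqrt (by exact_mod_cast hkM)
    have hmlen : (c :: t).length = t.length + 1 := rfl
    set A : ℝ := ((c :: t).length : ℝ) * Real.sqrt M with hAdef
    have hA1 : 1 ≤ A := by
      rw [hAdef, hmlen]
      have h1 : (1 : ℝ) ≤ ((t.length + 1 : ℕ) : ℝ) := by exact_mod_cast Nat.one_le_iff_ne_zero.mpr (by omega)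
      nlinarith
    have hApos : 0 < A := lt_of_lt_of_le one_pos hA1
    rcases eq_or_ne t [] with rfl | htne
    · -- singleton list
      have hlen1 : (c :: ([] : List ℝ)).length = 1 := rfl
      rw [hlen1]
      norm_num
      have hc2 : c ^ 2 = (kc : ℝ) := hkc
      have hkc1' : (1 : ℝ) ≤ (kc : ℝ) := by exact_mod_cast hkc1
      have : 1 ≤ |c| := by nlinarith [sq_abs c, abs_nonneg c]
      simpa using this
    · -- main case
      have htlen : t.length ≤ N := by
        have := hlen
        rw [hmlen] at this
        omega
      have hAbound : |c| + (t.map abs).sum ≤ A := by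
        have h1 : |c| ≤ Real.sqrt M := habs c (List.mem_cons_self)
        have h2 : (t.map abs).sum ≤ (t.map abs).length • Real.sqrt M := by
          apply List.sum_le_card_nsmul
          intro x hx
          obtain ⟨y, hy, rfl⟩ := List.mem_map.mp hx
          exact habs y (List.mem_cons_of_mem c hy)
        rw [List.length_map, nsmul_eq_mul] at h2
        rw [hAdef, hmlen]
        push_cast
        linarith
      obtain ⟨z, hz⟩ := Gp_int t htne
        (fun y hy => by
          obtain ⟨k, _, _, hk⟩ := hyp y (List.mem_cons_of_mem c hy)
          exact ⟨(k : ℤ), by exact_mod_cast hk⟩) c (kc : ℤ) (by exact_mod_cast hkc)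
      obtain ⟨H, hfac, hHle⟩ := Gp_factor A t c hAbound
      have hEeq : (c :: t).length - 1 = t.length := by rw [hmlen]; omega
      rcases eq_or_ne z 0 with rfl | hz0
      · -- degenerate case: reduce to a shorter list
        have hG0 : Gp t c = 0 := by rw [hz]; norm_num
        obtain ⟨u, hu, husum⟩ := Gp_zero t c hG0
        have hlsum : (c :: t).sum = 2 * u.sum := by
          rw [List.sum_cons]; exact husum
        have husum0 : u.sum ≠ 0 := by
          intro h0; exact hsum (by rw [hlsum, h0, mul_zero])
        have hune : u ≠ [] := by rintro rfl; exact husum0 rfl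
        have hulen : u.length ≤ N := le_trans hu.length_le htlen
        have hubound := ih u hulen hune
          (fun y hy => hyp y (List.mem_cons_of_mem c (hu.subset hy))) husum0
        have hul1 : 1 ≤ u.length := List.length_pos_iff.mpr hune
        -- compare the two bounds
        set B : ℝ := ((u.length : ℝ) * Real.sqrt M) with hBdef
        have hB1 : 1 ≤ B := by
          rw [hBdef]
          have h1 : (1 : ℝ) ≤ (u.length : ℝ) := by exact_mod_cast hul1
          nlinarith
        have hBpos : 0 < B := lt_of_lt_of_le one_pos hB1
        have hBA : B ≤ A := by
          rw [hBdef, hAdef]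
          have h1 : (u.length : ℝ) ≤ ((c :: t).length : ℝ) := by
            exact_mod_cast le_trans hu.length_le (by rw [hmlen]; omega)
          nlinarith
        have hEle : 2 ^ (u.length - 1) - 1 ≤ 2 ^ ((c :: t).length - 1) - 1 := by
          have : u.length - 1 ≤ (c :: t).length - 1 := by
            have := hu.length_le; rw [hmlen]; omega
          have := Nat.pow_le_pow_right (by omega : 1 ≤ 2) this
          omega
        rw [rpow_form A hApos, rpow_form B hBpos] at *
        have hpowle : A ^ (2 ^ (u.length - 1) - 1 : ℕ) ≤ A ^ (2 ^ ((c :: t).length - 1) - 1 : ℕ) :=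
          pow_le_pow_right₀ hA1 hEle
        have hpowle2 : B ^ (2 ^ (u.length - 1) - 1 : ℕ) ≤ A ^ (2 ^ (u.length - 1) - 1 : ℕ) :=
          pow_le_pow_left₀ hBpos.le hBA _
        have hinv : (A ^ (2 ^ ((c :: t).length - 1) - 1 : ℕ))⁻¹ ≤ (B ^ (2 ^ (u.length - 1) - 1 : ℕ))⁻¹ := by
          apply inv_anti₀ (by positivity)
          exact le_trans hpowle2 hpowle
        calc (A ^ (2 ^ ((c :: t).length - 1) - 1 : ℕ))⁻¹
            ≤ (B ^ (2 ^ (u.length - 1) - 1 : ℕ))⁻¹ := hinv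
          _ ≤ |u.sum| := hubound
          _ ≤ 2 * |u.sum| := by nlinarith [abs_nonneg u.sum]
          _ = |(c :: t).sum| := by rw [hlsum, abs_mul]; norm_num
      · -- nondegenerate: nonzero integer
        have h1z : (1 : ℝ) ≤ |(z : ℝ)| := by
          have : (1 : ℤ) ≤ |z| := Int.one_le_abs hz0
          exact_mod_cast this
        have hprod : |(c :: t).sum| * |H| = |(z : ℝ)| := by
          rw [← abs_mul, List.sum_cons, ← hfac, hz]
        have hHnn : 0 ≤ |H| := abs_nonneg _
        have hkey : 1 ≤ |(c :: t).sum| * (A ^ (2 ^ t.length - 1 : ℕ)) := by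
          calc (1 : ℝ) ≤ |(z : ℝ)| := h1z
            _ = |(c :: t).sum| * |H| := hprod.symm
            _ ≤ |(c :: t).sum| * (A ^ (2 ^ t.length - 1 : ℕ)) := by
                exact mul_le_mul_of_nonneg_left hHle (abs_nonneg _)
        rw [rpow_form A hApos, hEeq]
        rw [inv_eq_one_div, div_le_iff₀ (by positivity)]
        linarith

/-- Hughes–Rudnick: if `n₁, …, n_m ≤ M` are positive integers, `ε_j = ±1`, and
`∑ ε_j √(n_j) ≠ 0`, then `|∑ ε_j √(n_j)| ≥ (m √M)^{-(2^{m-1}-1)}`. -/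
theorem signed_sqrt_sum_lower_bound (m : ℕ) (hm : 1 ≤ m) (M : ℕ)
    (n : Fin m → ℕ) (ε : Fin m → ℝ)
    (hn : ∀ j, 1 ≤ n j ∧ n j ≤ M) (hε : ∀ j, ε j = 1 ∨ ε j = -1)
    (h : ∑ j, ε j * Real.sqrt (n j) ≠ 0) :
    ((m : ℝ) * Real.sqrt M) ^ (-((2 : ℝ) ^ (m - 1) - 1)) ≤ |∑ j, ε j * Real.sqrt (n j)| := by
  set l : List ℝ := List.ofFn (fun j => ε j * Real.sqrt (n j)) with hl
  have hlen : l.length = m := List.length_ofFn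
  have hsum : l.sum = ∑ j, ε j * Real.sqrt (n j) := List.sum_ofFn
  have hne : l ≠ [] := by
    intro h0
    rw [h0] at hlen
    simp at hlen
    omega
  have hyp : ∀ y ∈ l, ∃ k : ℕ, 1 ≤ k ∧ k ≤ M ∧ y ^ 2 = (k : ℝ) := by
    intro y hy
    rw [hl] at hy
    obtain ⟨j, rfl⟩ := List.mem_ofFn.mp hy
    refine ⟨n j, (hn j).1, (hn j).2, ?_⟩
    have hsq : Real.sqrt ((n j : ℝ)) ^ 2 = (n j : ℝ) := Real.sq_sqrt (Nat.cast_nonneg _)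
    rcases hε j with he | he <;> rw [he] <;> nlinarith [hsq]
  have hsum0 : l.sum ≠ 0 := by rw [hsum]; exact h
  have := aux M m l (le_of_eq hlen) hne hyp hsum0
  rw [hlen, hsum] at this
  exact this
end

section
/- The random series $F_{\mathbb{X}} = \frac{1}{\pi\sqrt{2}} \sum_{n \text{ square-free}} n^{-3/4} \sum_{r=1}^{\infty} d(nr^2) r^{-3/2} \cos(2\pi r \mathbb{X}_n - \pi/4)$ converges almost surely, where $\{\mathbb{X}_n\}$ are i.i.d. uniform on $[0,1]$ indexed by square-free positive integers. -/
-- L1: submultiplicativity of the divisor-counting function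
lemma card_divisors_mul_le {a b : ℕ} (ha : a ≠ 0) (hb : b ≠ 0) :
    (a * b).divisors.card ≤ a.divisors.card * b.divisors.card := by
  classical
  rw [← Finset.card_product]
  apply Finset.card_le_card_of_injOn (fun c => (Nat.gcd c a, c / Nat.gcd c a))
  · intro c hc
    rw [Finset.mem_coe, Nat.mem_divisors] at hc
    obtain ⟨hcd, hab⟩ := hc
    have hg : Nat.gcd c a ∣ a := Nat.gcd_dvd_right c a
    have hgpos : 0 < Nat.gcd c a := Nat.gcd_pos_of_pos_right c (Nat.pos_of_ne_zero ha)
    have hcg : c / Nat.gcd c a ∣ b := by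
      obtain ⟨k, hk⟩ := hcd
      have h1 : (c / Nat.gcd c a) * k = (a / Nat.gcd c a) * b := by
        apply Nat.eq_of_mul_eq_mul_left hgpos
        rw [← mul_assoc, ← mul_assoc, Nat.mul_div_cancel' (Nat.gcd_dvd_left c a),
          Nat.mul_div_cancel' hg, ← hk]
      have h2 : (c / Nat.gcd c a) ∣ (a / Nat.gcd c a) * b := ⟨k, h1.symm⟩
      exact (Nat.coprime_div_gcd_div_gcd hgpos).dvd_of_dvd_mul_left h2
    simp only [Finset.mem_coe, Finset.mem_product, Nat.mem_divisors]
    exact ⟨⟨Nat.gcd_dvd_right c a, ha⟩, ⟨hcg, hb⟩⟩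
  · intro c hc c' hc' h
    have h1 : Nat.gcd c a = Nat.gcd c' a := congrArg Prod.fst h
    have h2 : c / Nat.gcd c a = c' / Nat.gcd c' a := congrArg Prod.snd h
    rw [h1] at h2
    calc c = Nat.gcd c a * (c / Nat.gcd c' a) := by rw [h1]; exact (Nat.mul_div_cancel' (by rw [← h1]; exact Nat.gcd_dvd_left c a)).symm
    _ = Nat.gcd c' a * (c' / Nat.gcd c' a) := by rw [h1, h2]
    _ = c' := Nat.mul_div_cancel' (Nat.gcd_dvd_left c' a)
noncomputable def gg (a : ℕ) : ℝ := ((a : ℝ) + 1) ^ (-(3 : ℝ)/2)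

lemma gg_pos (a : ℕ) : 0 < gg a := by
  apply Real.rpow_pos_of_pos; positivity

lemma summable_gg : Summable gg := by
  have h : Summable (fun n : ℕ => (n : ℝ) ^ (-(3 : ℝ)/2)) := by
    rw [Real.summable_nat_rpow]; norm_num
  have := (summable_nat_add_iff 1).2 h
  convert this using 2 with a
  · rfl
  · simp [gg]

noncomputable def ff (p : (ℕ × ℕ) × (ℕ × ℕ)) : ℝ :=
  gg p.1.1 * gg p.1.2 * (gg p.2.1 * gg p.2.2)

lemma summable_ff : Summable ff := by
  have h2 : Summable (fun z : ℕ × ℕ => gg z.1 * gg z.2) := by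
    apply summable_mul_of_summable_norm (f := gg) (g := gg) <;>
      · simpa [Real.norm_eq_abs, abs_of_pos (gg_pos _)] using summable_gg
  have hn : (fun z : ℕ × ℕ => ‖gg z.1 * gg z.2‖) = fun z : ℕ × ℕ => gg z.1 * gg z.2 :=
    funext fun z => by rw [Real.norm_eq_abs, abs_of_pos (mul_pos (gg_pos _) (gg_pos _))]
  apply summable_mul_of_summable_norm (f := fun z : ℕ × ℕ => gg z.1 * gg z.2)
    (g := fun z : ℕ × ℕ => gg z.1 * gg z.2) <;> · rw [hn]; exact h2

lemma gg_mul (a b : ℕ) (ha : 1 ≤ a) (hb : 1 ≤ b) : gg (a * b - 1) = gg (a - 1) * gg (b - 1) := by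
  unfold gg
  rw [← Real.mul_rpow (by positivity) (by positivity)]
  congr 1
  have h1 : ((a * b - 1 : ℕ) : ℝ) + 1 = (a : ℝ) * b := by
    have : 1 ≤ a * b := Nat.one_le_iff_ne_zero.2 (Nat.mul_ne_zero (by omega) (by omega))
    push_cast [Nat.cast_sub this]
    ring
  have h2 : ((a - 1 : ℕ) : ℝ) + 1 = (a : ℝ) := by push_cast [Nat.cast_sub ha]; ring
  have h3 : ((b - 1 : ℕ) : ℝ) + 1 = (b : ℝ) := by push_cast [Nat.cast_sub hb]; ring
  rw [h1, h2, h3]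

lemma summable_dsq :
    Summable (fun m : ℕ => ((m + 1).divisors.card : ℝ) ^ 2 * ((m : ℝ) + 1) ^ (-(3 : ℝ)/2)) := by
  classical
  set T := Σ m : ℕ, {p : ℕ × ℕ // p ∈ (m + 1).divisors ×ˢ (m + 1).divisors} with hT
  set Φ : T → (ℕ × ℕ) × (ℕ × ℕ) := fun x =>
    ((Nat.gcd x.2.1.1 x.2.1.2 - 1, x.2.1.1 / Nat.gcd x.2.1.1 x.2.1.2 - 1),
     (x.2.1.2 / Nat.gcd x.2.1.1 x.2.1.2 - 1, (x.1 + 1) / Nat.lcm x.2.1.1 x.2.1.2 - 1)) with hΦ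
  have key : ∀ (m : ℕ) (u v : ℕ), u ∈ (m+1).divisors → v ∈ (m+1).divisors →
      (1 ≤ Nat.gcd u v ∧ Nat.gcd u v ∣ u ∧ Nat.gcd u v ∣ v ∧ Nat.lcm u v ∣ m + 1 ∧
       1 ≤ u ∧ 1 ≤ v ∧ 1 ≤ Nat.lcm u v) := by
    intro m u v hu hv
    rw [Nat.mem_divisors] at hu hv
    have hu1 : 1 ≤ u := Nat.pos_of_dvd_of_pos hu.1 (Nat.succ_pos m)
    have hv1 : 1 ≤ v := Nat.pos_of_dvd_of_pos hv.1 (Nat.succ_pos m)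
    have hl : Nat.lcm u v ∣ m + 1 := Nat.lcm_dvd hu.1 hv.1
    exact ⟨Nat.gcd_pos_of_pos_left v hu1, Nat.gcd_dvd_left u v, Nat.gcd_dvd_right u v, hl,
      hu1, hv1, Nat.pos_of_dvd_of_pos hl (Nat.succ_pos m)⟩
  have hval : ∀ x : T, ff (Φ x) = gg x.1 := by
    rintro ⟨m, ⟨⟨u, v⟩, hp⟩⟩
    rw [Finset.mem_product] at hp
    obtain ⟨hg1, hgu, hgv, hl, hu1, hv1, hl1⟩ := key m u v hp.1 hp.2
    set g := Nat.gcd u v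
    set l := Nat.lcm u v
    have hug : 1 ≤ u / g := Nat.one_le_div_iff hg1 |>.2 (Nat.le_of_dvd hu1 hgu)
    have hvg : 1 ≤ v / g := Nat.one_le_div_iff hg1 |>.2 (Nat.le_of_dvd hv1 hgv)
    have hml : 1 ≤ (m + 1) / l := Nat.one_le_div_iff hl1 |>.2 (Nat.le_of_dvd (Nat.succ_pos m) hl)
    show gg (g - 1) * gg (u / g - 1) * (gg (v / g - 1) * gg ((m + 1) / l - 1)) = gg m
    rw [← gg_mul g (u / g) hg1 hug, Nat.mul_div_cancel' hgu,
        ← gg_mul (v / g) ((m + 1) / l) hvg hml,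
        ← gg_mul u ((v / g) * ((m + 1) / l)) hu1 (Nat.one_le_iff_ne_zero.2 (by positivity))]
    have huvl : u * (v / g) = l := by
      rw [← Nat.mul_div_assoc u hgv, ← Nat.gcd_mul_lcm u v, Nat.mul_div_cancel_left l hg1]
    have : u * (v / g * ((m + 1) / l)) = m + 1 := by
      rw [← mul_assoc, huvl, Nat.mul_div_cancel' hl]
    rw [this]
    simp
  have hinj : Function.Injective Φ := by
    rintro ⟨m, ⟨⟨u, v⟩, hp⟩⟩ ⟨m', ⟨⟨u', v'⟩, hp'⟩⟩ heq
    have hp2 := Finset.mem_product.1 hp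
    have hp2' := Finset.mem_product.1 hp'
    obtain ⟨hg1, hgu, hgv, hl, hu1, hv1, hl1⟩ := key m u v hp2.1 hp2.2
    obtain ⟨hg1', hgu', hgv', hl', hu1', hv1', hl1'⟩ := key m' u' v' hp2'.1 hp2'.2
    simp only [hΦ, Prod.mk.injEq] at heq
    obtain ⟨⟨e1, e2⟩, e3, e4⟩ := heq
    have hug : 1 ≤ u / Nat.gcd u v := Nat.one_le_div_iff hg1 |>.2 (Nat.le_of_dvd hu1 hgu)
    have hug' : 1 ≤ u' / Nat.gcd u' v' := Nat.one_le_div_iff hg1' |>.2 (Nat.le_of_dvd hu1' hgu')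
    have hvg : 1 ≤ v / Nat.gcd u v := Nat.one_le_div_iff hg1 |>.2 (Nat.le_of_dvd hv1 hgv)
    have hvg' : 1 ≤ v' / Nat.gcd u' v' := Nat.one_le_div_iff hg1' |>.2 (Nat.le_of_dvd hv1' hgv')
    have hml : 1 ≤ (m + 1) / Nat.lcm u v :=
      Nat.one_le_div_iff hl1 |>.2 (Nat.le_of_dvd (Nat.succ_pos m) hl)
    have hml' : 1 ≤ (m' + 1) / Nat.lcm u' v' :=
      Nat.one_le_div_iff hl1' |>.2 (Nat.le_of_dvd (Nat.succ_pos m') hl')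
    have eg : Nat.gcd u v = Nat.gcd u' v' := by omega
    have eug : u / Nat.gcd u v = u' / Nat.gcd u' v' := by omega
    have evg : v / Nat.gcd u v = v' / Nat.gcd u' v' := by omega
    have eml : (m + 1) / Nat.lcm u v = (m' + 1) / Nat.lcm u' v' := by omega
    have eu : u = u' := by
      rw [← Nat.mul_div_cancel' hgu, ← Nat.mul_div_cancel' hgu', eug, eg]
    have ev : v = v' := by
      rw [← Nat.mul_div_cancel' hgv, ← Nat.mul_div_cancel' hgv', evg, eg]
    have em : m = m' := by
      have h1 : m + 1 = Nat.lcm u v * ((m + 1) / Nat.lcm u v) := (Nat.mul_div_cancel' hl).symm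
      have h2 : m' + 1 = Nat.lcm u' v' * ((m' + 1) / Nat.lcm u' v') := (Nat.mul_div_cancel' hl').symm
      rw [eml, eu, ev] at h1
      omega
    subst em
    exact congrArg (fun z => (⟨m, z⟩ : T)) (Subtype.ext (by simp [eu, ev]))
  have hsum : Summable (fun x : T => gg x.1) := by
    have := (summable_ff.comp_injective hinj)
    exact this.congr fun x => (hval x)
  have hsig := hsum.sigma
  apply hsig.congr
  intro m
  show (∑' _ : {p : ℕ × ℕ // p ∈ (m + 1).divisors ×ˢ (m + 1).divisors}, gg m) = _
  rw [tsum_const]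
  have hcard : Nat.card {p : ℕ × ℕ // p ∈ (m + 1).divisors ×ˢ (m + 1).divisors}
      = (m+1).divisors.card * (m+1).divisors.card := by
    rw [Nat.card_eq_fintype_card, Fintype.card_coe, Finset.card_product]
  rw [hcard, nsmul_eq_mul]
  unfold gg
  push_cast
  ring

noncomputable def wgt (r : ℕ) : ℝ := ((r + 1).divisors.card : ℝ) ^ 2 * ((r : ℝ) + 1) ^ (-(3 : ℝ)/2)

lemma wgt_nonneg (r : ℕ) : 0 ≤ wgt r := by unfold wgt; positivity

noncomputable def SS : ℝ := ∑' m : ℕ, wgt m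

lemma SS_nonneg : 0 ≤ SS := tsum_nonneg wgt_nonneg

noncomputable def trm (n r : ℕ) (x : ℝ) : ℝ :=
  ((n * (r + 1) ^ 2).divisors.card : ℝ) * ((r : ℝ) + 1) ^ (-(3 : ℝ)/2) *
    Real.cos (2 * Real.pi * ((r : ℝ) + 1) * x - Real.pi / 4)

lemma trm_bound {n : ℕ} (hn : n ≠ 0) (r : ℕ) (x : ℝ) :
    ‖trm n r x‖ ≤ (n.divisors.card : ℝ) * wgt r := by
  have hd : ((n * (r + 1) ^ 2).divisors.card : ℝ)
      ≤ (n.divisors.card : ℝ) * ((r + 1).divisors.card : ℝ) ^ 2 := by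
    have h1 : (n * (r + 1) ^ 2).divisors.card ≤ n.divisors.card * ((r + 1) ^ 2).divisors.card :=
      card_divisors_mul_le hn (by positivity)
    have h2 : ((r + 1) ^ 2).divisors.card ≤ (r + 1).divisors.card * (r + 1).divisors.card := by
      rw [sq]
      exact card_divisors_mul_le (Nat.succ_ne_zero r) (Nat.succ_ne_zero r)
    calc ((n * (r + 1) ^ 2).divisors.card : ℝ)
        ≤ (n.divisors.card * ((r + 1) ^ 2).divisors.card : ℕ) := by exact_mod_cast h1
      _ ≤ (n.divisors.card * ((r + 1).divisors.card * (r + 1).divisors.card) : ℕ) := by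
          exact_mod_cast Nat.mul_le_mul_left _ h2
      _ = (n.divisors.card : ℝ) * ((r + 1).divisors.card : ℝ) ^ 2 := by push_cast; ring
  have hrp : (0:ℝ) < ((r : ℝ) + 1) ^ (-(3 : ℝ)/2) := Real.rpow_pos_of_pos (by positivity) _
  unfold trm wgt
  rw [norm_mul, norm_mul]
  have hcos : ‖Real.cos (2 * Real.pi * ((r : ℝ) + 1) * x - Real.pi / 4)‖ ≤ 1 := by
    rw [Real.norm_eq_abs]; exact Real.abs_cos_le_one _
  calc ‖((n * (r + 1) ^ 2).divisors.card : ℝ)‖ * ‖((r : ℝ) + 1) ^ (-(3 : ℝ)/2)‖ *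
        ‖Real.cos (2 * Real.pi * ((r : ℝ) + 1) * x - Real.pi / 4)‖
      ≤ ‖((n * (r + 1) ^ 2).divisors.card : ℝ)‖ * ‖((r : ℝ) + 1) ^ (-(3 : ℝ)/2)‖ * 1 := by
        apply mul_le_mul_of_nonneg_left hcos; positivity
    _ = ((n * (r + 1) ^ 2).divisors.card : ℝ) * (((r : ℝ) + 1) ^ (-(3 : ℝ)/2)) := by
        rw [mul_one, Real.norm_eq_abs, Real.norm_eq_abs, abs_of_nonneg (by positivity),
          abs_of_nonneg hrp.le]
    _ ≤ (n.divisors.card : ℝ) * ((r + 1).divisors.card : ℝ) ^ 2 * (((r : ℝ) + 1) ^ (-(3 : ℝ)/2)) := by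
        apply mul_le_mul_of_nonneg_right hd hrp.le
    _ = (n.divisors.card : ℝ) * (((r + 1).divisors.card : ℝ) ^ 2 * ((r : ℝ) + 1) ^ (-(3 : ℝ)/2)) := by
        ring

lemma summable_wgt : Summable wgt := summable_dsq

lemma summable_bound (n : ℕ) : Summable (fun r => (n.divisors.card : ℝ) * wgt r) :=
  summable_wgt.mul_left _

lemma summable_trm {n : ℕ} (hn : n ≠ 0) (x : ℝ) : Summable (fun r => trm n r x) :=
  Summable.of_norm_bounded (summable_bound n) (fun r => trm_bound hn r x)

noncomputable def innf (n : ℕ) (x : ℝ) : ℝ := ∑' r : ℕ, trm n r x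

lemma innf_bound {n : ℕ} (hn : n ≠ 0) (x : ℝ) : |innf n x| ≤ (n.divisors.card : ℝ) * SS := by
  unfold innf
  calc |∑' r : ℕ, trm n r x| ≤ ∑' r : ℕ, |trm n r x| := by
        simpa [Real.norm_eq_abs] using norm_tsum_le_tsum_norm ((summable_trm hn x).abs.congr
          (fun r => (Real.norm_eq_abs _).symm))
    _ ≤ ∑' r : ℕ, (n.divisors.card : ℝ) * wgt r := by
        apply Summable.tsum_le_tsum _ ((summable_trm hn x).abs) (summable_bound n)
        intro r
        exact trm_bound hn r x
    _ = (n.divisors.card : ℝ) * SS := by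
        unfold SS; rw [tsum_mul_left]

lemma continuous_innf {n : ℕ} (hn : n ≠ 0) : Continuous (innf n) := by
  apply continuous_tsum (u := fun r => (n.divisors.card : ℝ) * wgt r)
  · intro r
    apply Continuous.mul continuous_const
    exact Real.continuous_cos.comp (by continuity)
  · exact summable_bound n
  · intro r x; exact trm_bound hn r x

open MeasureTheory in
lemma integral_cos_zero (r : ℕ) :
    ∫ x in Set.Icc (0:ℝ) 1, Real.cos (2 * Real.pi * ((r : ℝ) + 1) * x - Real.pi / 4) = 0 := by
  set c : ℝ := 2 * Real.pi * ((r : ℝ) + 1) with hc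
  have hc0 : c ≠ 0 := by
    have := Real.pi_pos
    positivity
  have h1 : ∫ x in Set.Icc (0:ℝ) 1, Real.cos (c * x - Real.pi / 4)
      = ∫ x in (0:ℝ)..1, Real.cos (c * x + -(Real.pi / 4)) := by
    rw [MeasureTheory.integral_Icc_eq_integral_Ioc,
      ← intervalIntegral.integral_of_le (zero_le_one)]
    simp only [sub_eq_add_neg]
  rw [h1, intervalIntegral.integral_comp_mul_add Real.cos hc0 (-(Real.pi / 4)), integral_cos]
  have h2 : c * 1 + -(Real.pi/4) = -(Real.pi/4) + (r + 1 : ℕ) * (2 * Real.pi) := by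
    rw [hc]; push_cast; ring
  have h3 : c * 0 + -(Real.pi/4) = -(Real.pi/4) := by ring
  rw [h2, h3, Real.sin_add_nat_mul_two_pi]
  simp only [sub_self, smul_eq_mul, mul_zero]

open MeasureTheory in
lemma integral_trm_zero (n r : ℕ) :
    ∫ x in Set.Icc (0:ℝ) 1, trm n r x = 0 := by
  unfold trm
  rw [MeasureTheory.integral_const_mul, integral_cos_zero, mul_zero]

open MeasureTheory in
lemma integral_innf_zero {n : ℕ} (hn : n ≠ 0) :
    ∫ x in Set.Icc (0:ℝ) 1, innf n x = 0 := by
  unfold innf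
  rw [MeasureTheory.integral_tsum]
  · simp [integral_trm_zero]
  · intro r
    exact Continuous.aestronglyMeasurable (by
      apply Continuous.mul continuous_const
      exact Real.continuous_cos.comp (by continuity))
  · have hb : ∀ r : ℕ, ∫⁻ x in Set.Icc (0:ℝ) 1, ‖trm n r x‖₊
        ≤ ENNReal.ofReal ((n.divisors.card : ℝ) * wgt r) := by
      intro r
      calc ∫⁻ x in Set.Icc (0:ℝ) 1, ‖trm n r x‖₊
          ≤ ∫⁻ _ in Set.Icc (0:ℝ) 1, ENNReal.ofReal ((n.divisors.card : ℝ) * wgt r) := by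
            apply MeasureTheory.lintegral_mono
            intro x
            show (‖trm n r x‖₊ : ENNReal) ≤ _
            rw [← enorm_eq_nnnorm, ← ofReal_norm_eq_enorm]
            exact ENNReal.ofReal_le_ofReal (trm_bound hn r x)
        _ = ENNReal.ofReal ((n.divisors.card : ℝ) * wgt r) := by
            rw [MeasureTheory.lintegral_const, Measure.restrict_apply MeasurableSet.univ,
              Set.univ_inter, Real.volume_Icc]
            norm_num
    apply ne_of_lt
    calc ∑' r : ℕ, ∫⁻ x in Set.Icc (0:ℝ) 1, ‖trm n r x‖₊
        ≤ ∑' r : ℕ, ENNReal.ofReal ((n.divisors.card : ℝ) * wgt r) := ENNReal.tsum_le_tsum hb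
      _ = ENNReal.ofReal (∑' r : ℕ, (n.divisors.card : ℝ) * wgt r) := by
          rw [ENNReal.ofReal_tsum_of_nonneg
            (fun r => mul_nonneg (by positivity) (wgt_nonneg r)) (summable_bound n)]
      _ < ⊤ := ENNReal.ofReal_lt_top

noncomputable def phi (n : ℕ) (x : ℝ) : ℝ :=
  1 / (Real.pi * Real.sqrt 2) * (n : ℝ) ^ (-(3 : ℝ) / 4) * innf n x

noncomputable def Bd (n : ℕ) : ℝ :=
  1 / (Real.pi * Real.sqrt 2) * (n : ℝ) ^ (-(3 : ℝ) / 4) * ((n.divisors.card : ℝ) * SS)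

lemma c0_pos : 0 < 1 / (Real.pi * Real.sqrt 2) := by
  have := Real.pi_pos
  have : (0:ℝ) < Real.sqrt 2 := Real.sqrt_pos.2 (by norm_num)
  positivity

lemma Bd_nonneg (n : ℕ) : 0 ≤ Bd n := by
  unfold Bd
  have h1 := c0_pos
  have h2 : (0:ℝ) ≤ (n : ℝ) ^ (-(3 : ℝ) / 4) := Real.rpow_nonneg (Nat.cast_nonneg n) _
  have h3 : (0:ℝ) ≤ (n.divisors.card : ℝ) * SS := mul_nonneg (Nat.cast_nonneg _) SS_nonneg
  positivity

lemma phi_cont {n : ℕ} (hn : n ≠ 0) : Continuous (phi n) :=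
  (continuous_const.mul (continuous_innf hn))

lemma phi_bound {n : ℕ} (hn : n ≠ 0) (x : ℝ) : |phi n x| ≤ Bd n := by
  unfold phi Bd
  rw [abs_mul, abs_of_nonneg (by positivity : (0:ℝ) ≤ 1 / (Real.pi * Real.sqrt 2) * (n : ℝ) ^ (-(3 : ℝ) / 4))]
  exact mul_le_mul_of_nonneg_left (innf_bound hn x) (by positivity)

open MeasureTheory in
lemma integral_phi_zero {n : ℕ} (hn : n ≠ 0) :
    ∫ x in Set.Icc (0:ℝ) 1, phi n x = 0 := by
  unfold phi
  rw [MeasureTheory.integral_const_mul, integral_innf_zero hn, mul_zero]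

lemma summable_Bdsq : Summable (fun m : ℕ => Bd (m + 1) ^ 2) := by
  have key : ∀ m : ℕ, Bd (m + 1) ^ 2 = (1 / (Real.pi * Real.sqrt 2) * SS) ^ 2 *
      (((m + 1).divisors.card : ℝ) ^ 2 * ((m : ℝ) + 1) ^ (-(3 : ℝ)/2)) := by
    intro m
    unfold Bd
    have hc : ((m + 1 : ℕ) : ℝ) = (m : ℝ) + 1 := by push_cast; ring
    have hpos : (0:ℝ) < (m : ℝ) + 1 := by positivity
    have hr : (((m : ℝ) + 1) ^ (-(3 : ℝ) / 4)) ^ 2 = ((m : ℝ) + 1) ^ (-(3 : ℝ)/2) := by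
      rw [sq, ← Real.rpow_add hpos]
      norm_num
    rw [hc]
    rw [mul_pow, mul_pow, mul_pow, hr]
    ring
  rw [funext key]
  exact summable_dsq.mul_left _


open MeasureTheory ProbabilityTheory Filter in
/-- Almost sure convergence of the random trigonometric series
`F_𝕏 = (1/(π√2)) ∑_{n sqfree} n^{-3/4} ∑_{r ≥ 1} d(nr²) r^{-3/2} cos(2π r X_n - π/4)`,
where the `X_n` are i.i.d. uniform on `[0,1]` indexed by square-free positive integers. -/
theorem random_series_converges_ae
    {Ω : Type*} [MeasurableSpace Ω] (μ : Measure Ω) [IsProbabilityMeasure μ]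
    (X : ℕ → Ω → ℝ) (hmeas : ∀ n, Measurable (X n))
    (hunif : ∀ n, Squarefree n →
      Measure.map (X n) μ = MeasureTheory.volume.restrict (Set.Icc (0 : ℝ) 1))
    (hindep : iIndepFun
      (fun n : {n : ℕ // Squarefree n} => X n.1) μ) :
    ∀ᵐ ω ∂μ, ∃ ℓ : ℝ, Tendsto (fun K : ℕ =>
        ∑ n ∈ (Finset.Icc 1 K).filter Squarefree,
          (1 / (Real.pi * Real.sqrt 2)) * (n : ℝ) ^ (-(3 : ℝ) / 4) *
            ∑' r : ℕ, ((n * (r + 1) ^ 2).divisors.card : ℝ) * ((r : ℝ) + 1) ^ (-(3 : ℝ) / 2) *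
              Real.cos (2 * Real.pi * ((r : ℝ) + 1) * X n ω - Real.pi / 4))
      atTop (nhds ℓ) := by
  classical
  set s : ℕ → Finset ℕ := fun K => (Finset.Icc 1 K).filter Squarefree with hs
  set F : ℕ → Ω → ℝ := fun K ω => ∑ n ∈ s K, phi n (X n ω) with hF
  have hsqne : ∀ {n : ℕ}, Squarefree n → n ≠ 0 := by
    rintro n h rfl
    exact not_squarefree_zero h
  have hmem : ∀ {n K : ℕ}, n ∈ s K ↔ (1 ≤ n ∧ n ≤ K) ∧ Squarefree n := by
    intro n K
    simp [hs, Finset.mem_filter, Finset.mem_Icc]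
  -- measurability / integrability of summands
  have hYsm : ∀ n : ℕ, Squarefree n → AEStronglyMeasurable (fun ω => phi n (X n ω)) μ :=
    fun n hn => ((phi_cont (hsqne hn)).measurable.comp (hmeas n)).aestronglyMeasurable
  have hY2 : ∀ n : ℕ, Squarefree n → MemLp (fun ω => phi n (X n ω)) 2 μ := by
    intro n hn
    apply MemLp.of_bound (hYsm n hn) (Bd n)
    exact Filter.Eventually.of_forall fun ω => by
      rw [Real.norm_eq_abs]; exact phi_bound (hsqne hn) (X n ω)
  have hYint : ∀ n : ℕ, Squarefree n → Integrable (fun ω => phi n (X n ω)) μ :=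
    fun n hn => (hY2 n hn).integrable one_le_two
  have hmean : ∀ n : ℕ, Squarefree n → ∫ ω, phi n (X n ω) ∂μ = 0 := by
    intro n hn
    have h1 : ∫ ω, phi n (X n ω) ∂μ = ∫ x, phi n x ∂(Measure.map (X n) μ) := by
      rw [integral_map (hmeas n).aemeasurable]
      exact (phi_cont (hsqne hn)).aestronglyMeasurable
    rw [h1, hunif n hn]
    exact integral_phi_zero (hsqne hn)
  -- the filtration
  set 𝒢 : Filtration ℕ (inferInstance : MeasurableSpace Ω) :=
    { seq := fun K => ⨆ i ∈ {i : {n : ℕ // Squarefree n} | (i : ℕ) ≤ K},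
        MeasurableSpace.comap (X i) inferInstance
      mono' := by
        intro K L hKL
        apply biSup_mono
        intro i hi
        exact le_trans hi hKL
      le' := by
        intro K
        apply iSup_le
        intro i
        apply iSup_le
        intro _
        exact (hmeas i).comap_le } with h𝒢
  have hXG : ∀ (K : ℕ) (i : {n : ℕ // Squarefree n}), (i : ℕ) ≤ K →
      @Measurable Ω ℝ (𝒢 K) _ (X i) := by
    intro K i hiK
    apply measurable_iff_comap_le.2
    exact le_iSup₂ (f := fun (j : {n : ℕ // Squarefree n}) (_ : j ∈ {i : {n : ℕ // Squarefree n} | (i : ℕ) ≤ K}) => MeasurableSpace.comap (X j) inferInstance) i hiK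
  have hadp : StronglyAdapted 𝒢 F := by
    intro K
    apply Finset.stronglyMeasurable_fun_sum
    intro n hn
    obtain ⟨⟨h1, h2⟩, h3⟩ := hmem.1 hn
    exact ((phi_cont (hsqne h3)).measurable.comp (hXG K ⟨n, h3⟩ h2)).stronglyMeasurable
  have hintF : ∀ K, Integrable (F K) μ := by
    intro K
    apply integrable_finset_sum
    intro n hn
    exact hYint n (hmem.1 hn).2
  -- martingale property
  have hindepG : ∀ (K : ℕ) (hK : Squarefree (K + 1)),
      Indep (MeasurableSpace.comap (X (K + 1)) inferInstance) (𝒢 K) μ := by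
    intro K hK
    have hiI : iIndep (fun i : {n : ℕ // Squarefree n} =>
        MeasurableSpace.comap (X i.1) inferInstance) μ :=
      (iIndepFun_iff_iIndep _ _ _).1 hindep
    have hdisj : Disjoint ({(⟨K + 1, hK⟩ : {n : ℕ // Squarefree n})} : Set {n : ℕ // Squarefree n})
        {i : {n : ℕ // Squarefree n} | (i : ℕ) ≤ K} := by
      rw [Set.disjoint_left]
      rintro i rfl hi
      simp at hi
    have := indep_iSup_of_disjoint (fun i => (hmeas i.1).comap_le) hiI hdisj
    rw [iSup_singleton] at this
    exact this
  have hmart : Martingale F 𝒢 μ := by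
    apply martingale_nat hadp hintF
    intro K
    by_cases hK : Squarefree (K + 1)
    · have hnotmem : K + 1 ∉ s K := by
        intro h
        exact absurd (hmem.1 h).1.2 (by omega)
      have hins : s (K + 1) = insert (K + 1) (s K) := by
        ext n
        simp only [hs, Finset.mem_filter, Finset.mem_Icc, Finset.mem_insert]
        constructor
        · rintro ⟨⟨h1, h2⟩, h3⟩
          rcases Nat.eq_or_lt_of_le h2 with h | h
          · exact Or.inl h
          · exact Or.inr ⟨⟨h1, by omega⟩, h3⟩
        · rintro (rfl | ⟨⟨h1, h2⟩, h3⟩)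
          · exact ⟨⟨by omega, le_refl _⟩, hK⟩
          · exact ⟨⟨h1, by omega⟩, h3⟩
      have hFsucc : F (K + 1) = F K + fun ω => phi (K + 1) (X (K + 1) ω) := by
        funext ω
        simp only [hF, Pi.add_apply]
        rw [hins, Finset.sum_insert hnotmem]
        ring
      rw [hFsucc]
      have hce := condExp_add (μ := μ) (m := 𝒢 K) (hintF K) (hYint (K + 1) hK)
      refine EventuallyEq.trans ?_ hce.symm
      have h1 : μ[F K | 𝒢 K] =ᵐ[μ] F K := by
        rw [condExp_of_stronglyMeasurable (𝒢.le K) (hadp K) (hintF K)]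
      have h2 : μ[(fun ω => phi (K + 1) (X (K + 1) ω)) | 𝒢 K] =ᵐ[μ] fun _ => 0 := by
        have hsm1 : StronglyMeasurable[MeasurableSpace.comap (X (K + 1)) inferInstance]
            (fun ω => phi (K + 1) (X (K + 1) ω)) := by
          apply Measurable.stronglyMeasurable
          exact (phi_cont (hsqne hK)).measurable.comp (measurable_iff_comap_le.2 le_rfl)
        have := condExp_indep_eq (μ := μ) ((hmeas (K + 1)).comap_le) (𝒢.le K) hsm1
          (hindepG K hK)
        rw [hmean (K + 1) hK] at this
        exact this
      calc F K =ᵐ[μ] μ[F K | 𝒢 K] := h1.symm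
        _ =ᵐ[μ] μ[F K | 𝒢 K] + μ[(fun ω => phi (K + 1) (X (K + 1) ω)) | 𝒢 K] := by
            filter_upwards [h2] with ω hω
            simp [hω]
    · have hset : s (K + 1) = s K := by
        ext n
        simp only [hs, Finset.mem_filter, Finset.mem_Icc]
        constructor
        · rintro ⟨⟨h1, h2⟩, h3⟩
          have : n ≠ K + 1 := fun e => hK (e ▸ h3)
          exact ⟨⟨h1, by omega⟩, h3⟩
        · rintro ⟨⟨h1, h2⟩, h3⟩
          exact ⟨⟨h1, by omega⟩, h3⟩
      have hFsucc : F (K + 1) = F K := by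
        funext ω
        simp only [hF]
        rw [hset]
      rw [hFsucc]
      rw [condExp_of_stronglyMeasurable (𝒢.le K) (hadp K) (hintF K)]
  -- the L¹ bound
  set V : ℝ := ∑' m : ℕ, Bd (m + 1) ^ 2 with hV
  have hVnonneg : 0 ≤ V := tsum_nonneg fun m => sq_nonneg _
  have hFmean : ∀ K, ∫ ω, F K ω ∂μ = 0 := by
    intro K
    rw [hF]
    rw [integral_finset_sum _ (fun n hn => hYint n (hmem.1 hn).2)]
    exact Finset.sum_eq_zero fun n hn => hmean n (hmem.1 hn).2
  have hF2 : ∀ K, MemLp (F K) 2 μ := by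
    intro K
    have h := memLp_finsetSum' (μ := μ) (s K) (fun n hn => hY2 n (hmem.1 hn).2)
    have he : (∑ n ∈ s K, fun ω => phi n (X n ω)) = F K := by
      funext ω
      simp [hF, Finset.sum_apply]
    rwa [he] at h
  have hvar : ∀ K, variance (F K) μ ≤ V := by
    intro K
    have hpair : Set.Pairwise ↑(s K)
        (fun i j => IndepFun (fun ω => phi i (X i ω)) (fun ω => phi j (X j ω)) μ) := by
      intro i hi j hj hij
      have hsi := (hmem.1 hi).2
      have hsj := (hmem.1 hj).2
      have hXij : IndepFun (X i) (X j) μ := by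
        have := hindep.indepFun (i := ⟨i, hsi⟩) (j := ⟨j, hsj⟩)
          (by simp [Subtype.ext_iff]; exact hij)
        exact this
      exact hXij.comp (phi_cont (hsqne hsi)).measurable (phi_cont (hsqne hsj)).measurable
    have hsum := IndepFun.variance_sum (μ := μ)
      (X := fun n => fun ω => phi n (X n ω)) (s := s K)
      (fun n hn => hY2 n (hmem.1 hn).2) hpair
    have hFv : variance (F K) μ = ∑ n ∈ s K, variance (fun ω => phi n (X n ω)) μ := by
      rw [← hsum]
      congr 1
      funext ω
      simp [hF, Finset.sum_apply]
    rw [hFv]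
    have hone : ∀ n ∈ s K, variance (fun ω => phi n (X n ω)) μ ≤ Bd n ^ 2 := by
      intro n hn
      have hb := variance_le_sq_of_bounded (μ := μ) (a := -(Bd n)) (b := Bd n)
        (Filter.Eventually.of_forall fun ω => by
          have := phi_bound (hsqne (hmem.1 hn).2) (X n ω)
          rw [abs_le] at this
          exact ⟨this.1, this.2⟩)
        ((phi_cont (hsqne (hmem.1 hn).2)).measurable.comp (hmeas n)).aemeasurable
      calc variance (fun ω => phi n (X n ω)) μ ≤ ((Bd n - -(Bd n)) / 2) ^ 2 := hb
        _ = Bd n ^ 2 := by ring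
    calc ∑ n ∈ s K, variance (fun ω => phi n (X n ω)) μ ≤ ∑ n ∈ s K, Bd n ^ 2 :=
          Finset.sum_le_sum hone
      _ = ∑ m ∈ (s K).image (· - 1), Bd (m + 1) ^ 2 := by
          rw [Finset.sum_image (by
            intro a ha b hb hab
            have ha1 := (hmem.1 ha).1.1
            have hb1 := (hmem.1 hb).1.1
            simp only at hab
            omega)]
          apply Finset.sum_congr rfl
          intro n hn
          have h1 := (hmem.1 hn).1.1
          rw [Nat.sub_add_cancel h1]
      _ ≤ V := Summable.sum_le_tsum _ (fun m _ => sq_nonneg _) summable_Bdsq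
  have hintabs : ∀ K, ∫ ω, |F K ω| ∂μ ≤ Real.sqrt V := by
    intro K
    have hconj : Real.HolderConjugate 2 2 := Real.HolderConjugate.two_two
    have hmemabs : MemLp (fun ω => |F K ω|) (ENNReal.ofReal 2) μ := by
      have : ENNReal.ofReal 2 = 2 := by norm_num
      rw [this]
      exact (hF2 K).abs
    have hmem1 : MemLp (fun _ : Ω => (1 : ℝ)) (ENNReal.ofReal 2) μ := memLp_const 1
    have hH := integral_mul_le_Lp_mul_Lq_of_nonneg (μ := μ) hconj
      (Filter.Eventually.of_forall fun ω => abs_nonneg (F K ω))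
      (Filter.Eventually.of_forall fun _ => zero_le_one)
      hmemabs hmem1
    have hL : ∫ ω, |F K ω| * 1 ∂μ = ∫ ω, |F K ω| ∂μ := by simp
    have hsq : ∀ ω : Ω, |F K ω| ^ (2:ℝ) = (F K ω) ^ 2 := by
      intro ω
      rw [show ((2:ℝ)) = ((2:ℕ):ℝ) by norm_num, Real.rpow_natCast, sq_abs]
    have hone : ∫ ω : Ω, (1:ℝ) ^ (2:ℝ) ∂μ = 1 := by simp
    rw [hL, hone] at hH
    have hint2 : ∫ ω, |F K ω| ^ (2:ℝ) ∂μ = ∫ ω, (F K ω) ^ 2 ∂μ :=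
      integral_congr_ae (Filter.Eventually.of_forall fun ω => hsq ω)
    rw [hint2] at hH
    have hVle : ∫ ω, (F K ω) ^ 2 ∂μ ≤ V := by
      have hvd := variance_eq_sub (hF2 K)
      have hμF : μ[F K] = 0 := hFmean K
      have : μ[(F K) ^ 2] = variance (F K) μ := by
        rw [hvd, hμF]
        ring
      have heq : μ[(F K) ^ 2] = ∫ ω, (F K ω) ^ 2 ∂μ := by
        apply integral_congr_ae
        exact Filter.Eventually.of_forall fun ω => by simp [Pi.pow_apply]
      rw [← heq, this]
      exact hvar K
    calc ∫ ω, |F K ω| ∂μ ≤ (∫ ω, (F K ω) ^ 2 ∂μ) ^ ((1:ℝ)/2) * 1 ^ ((1:ℝ)/2) := hH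
      _ = (∫ ω, (F K ω) ^ 2 ∂μ) ^ ((1:ℝ)/2) := by rw [Real.one_rpow, mul_one]
      _ ≤ V ^ ((1:ℝ)/2) := by
          apply Real.rpow_le_rpow (integral_nonneg fun ω => sq_nonneg _) hVle
          norm_num
      _ = Real.sqrt V := (Real.sqrt_eq_rpow V).symm
  have hbdd : ∀ K, eLpNorm (F K) 1 μ ≤ ((Real.sqrt V).toNNReal : ENNReal) := by
    intro K
    rw [eLpNorm_one_eq_lintegral_enorm,
      ← ofReal_integral_norm_eq_lintegral_enorm (hintF K)]
    have : ∫ ω, ‖F K ω‖ ∂μ = ∫ ω, |F K ω| ∂μ := by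
      simp [Real.norm_eq_abs]
    rw [this]
    calc ENNReal.ofReal (∫ ω, |F K ω| ∂μ) ≤ ENNReal.ofReal (Real.sqrt V) :=
        ENNReal.ofReal_le_ofReal (hintabs K)
      _ = ((Real.sqrt V).toNNReal : ENNReal) := rfl
  have hconv := hmart.submartingale.exists_ae_tendsto_of_bdd hbdd
  filter_upwards [hconv] with ω hω
  exact hω
end
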